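/- arXiv:2208.08771 — 3 statements merged into one kernel-verified Lean document; each statement's English description precedes it below -/
import Mathlib

section
/- Infeasible-case quasi-Newton step inequalities: under the infeasible two-step setup, assume additionally that α_dec ∈ (0,1) satisfies α_dec + σ_max ≤ 1 − σ_min; that (1 − ᾱ_k)(x^k)ᵀz^k ≤ (x^{k+1})ᵀz^{k+1} ≤ (1 − α_dec·ᾱ_k)(x^k)ᵀz^k; that γμ_{k+1} ≤ x^{k+1}_i z^{k+1}_i ≤ μ_{k+1}/γ for all i; that ‖(D^k)⁻¹(ᾱ_kΔx^k + ᾱΔx′)‖ ≤ C₆·ᾱ_k·n^{5/2}·μ_k^{1/2} and ‖D^k(ᾱ_kΔz^k + ᾱΔz′)‖ ≤ C₆·ᾱ_k·n^{5/2}·μ_k^{1/2}, where C₆ = (σ_max + γ^{−1} + 8β)(1 + 2C₃^{−1})γ^{−1/2} with β ≥ 1. Define κ = 2ω² + C₆² and C₅ = C₃^{−1}σ_min / ( C₃^{−1}σ_min + ((1+γ)/(1−γ))·κ ). If ᾱ_k ∈ (0, min{1, ((1 + C₃)ω²)^{−1}, C₅/n⁵}] and ᾱ ∈ [(C₃C₅)^{−1}·n⁵·ᾱ_k²,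 C₃^{−1}·ᾱ_k], then with x^{k+2} = x^{k+1} + ᾱΔx′, z^{k+2} = z^{k+1} + ᾱΔz′ and μ_{k+2} = ((x^{k+2})ᵀz^{k+2})/n: (i) (1 − ᾱ)(x^{k+1})ᵀz^{k+1} ≤ (x^{k+2})ᵀz^{k+2} ≤ (1 − α_dec·ᾱ)(x^{k+1})ᵀz^{k+1}, and (ii) γμ_{k+2} ≤ x^{k+2}_i z^{k+2}_i ≤ (1/γ)μ_{k+2} for every i. -/
open scoped BigOperators

set_option maxHeartbeats 2000000

/-- Euclidean norm of a finitely-indexed real vector. -/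
noncomputable def euclNorm {ι : Type*} [Fintype ι] (v : ι → ℝ) : ℝ :=
  Real.sqrt (∑ i, v i ^ 2)


lemma cs_pair {m : ℕ} (u v : Fin m → ℝ) (R : ℝ) (hu : euclNorm u ≤ R) (hv : euclNorm v ≤ R) :
    (∀ i, |u i * v i| ≤ R ^ 2) ∧ |∑ i, u i * v i| ≤ R ^ 2 := by
  unfold euclNorm at hu hv
  have hR : 0 ≤ R := le_trans (Real.sqrt_nonneg _) hu
  have hnn : ∀ (w : Fin m → ℝ), (0:ℝ) ≤ Real.sqrt (∑ i, w i ^ 2) := fun w => Real.sqrt_nonneg _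
  have hprod : Real.sqrt (∑ i, u i ^ 2) * Real.sqrt (∑ i, v i ^ 2) ≤ R ^ 2 := by
    calc Real.sqrt (∑ i, u i ^ 2) * Real.sqrt (∑ i, v i ^ 2) ≤ R * R :=
      mul_le_mul hu hv (hnn v) hR
    _ = R ^ 2 := (sq R).symm
  constructor
  · intro i
    have h1 : |u i| ≤ Real.sqrt (∑ j, u j ^ 2) := by
      rw [← Real.sqrt_sq_eq_abs]
      exact Real.sqrt_le_sqrt (Finset.single_le_sum (fun j _ => sq_nonneg (u j)) (Finset.mem_univ i))
    have h2 : |v i| ≤ Real.sqrt (∑ j, v j ^ 2) := by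
      rw [← Real.sqrt_sq_eq_abs]
      exact Real.sqrt_le_sqrt (Finset.single_le_sum (fun j _ => sq_nonneg (v j)) (Finset.mem_univ i))
    rw [abs_mul]
    calc |u i| * |v i| ≤ R * R :=
      mul_le_mul (h1.trans hu) (h2.trans hv) (abs_nonneg _) hR
    _ = R ^ 2 := (sq R).symm
  · rw [abs_le]
    constructor
    · have h := Real.sum_mul_le_sqrt_mul_sqrt Finset.univ (fun i => -u i) v
      simp only [neg_mul, Finset.sum_neg_distrib, neg_sq] at h
      linarith
    · have h := Real.sum_mul_le_sqrt_mul_sqrt Finset.univ u v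
      linarith

lemma sqrt_ratio_mul {a b : ℝ} (ha : 0 < a) (hb : 0 < b) :
    Real.sqrt (a / b) * Real.sqrt (b / a) = 1 := by
  rw [← Real.sqrt_mul (div_nonneg ha.le hb.le)]
  rw [show a / b * (b / a) = 1 by field_simp]
  exact Real.sqrt_one

/-- Infeasible-case quasi-Newton step inequalities. -/
theorem inf_qn_step_inequalities
    (n : ℕ) (hn : 1 ≤ n)
    (γ σmin σmax ω C₃ : ℝ)
    (hγ : γ ∈ Set.Ioo (0:ℝ) 1)
    (hσ0 : 0 < σmin) (hσ : σmin ≤ σmax) (hσ1 : σmax < 1)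
    (hω : 0 < ω) (hC₃ : 1 ≤ C₃)
    (xk zk xk1 zk1 : Fin n → ℝ)
    (hxk : ∀ i, 0 < xk i) (hzk : ∀ i, 0 < zk i)
    (hxk1pos : ∀ i, 0 < xk1 i) (hzk1pos : ∀ i, 0 < zk1 i)
    (μk μk1 : ℝ)
    (hμk : μk = (∑ i, xk i * zk i) / n)
    (hμk1 : μk1 = (∑ i, xk1 i * zk1 i) / n)
    (hNbr : ∀ i, γ * μk ≤ xk i * zk i ∧ xk i * zk i ≤ μk / γ)
    (σk σk1 αk α : ℝ)
    (hσk : σmin ≤ σk ∧ σk ≤ σmax) (hσk1 : σmin ≤ σk1 ∧ σk1 ≤ σmax)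
    (Δx Δz : Fin n → ℝ)
    (hNewton : ∀ i, zk i * Δx i + xk i * Δz i = σk * μk - xk i * zk i)
    (hDx : euclNorm (fun i => Real.sqrt (zk i / xk i) * Δx i) ≤ ω * n * Real.sqrt μk)
    (hDz : euclNorm (fun i => Real.sqrt (xk i / zk i) * Δz i) ≤ ω * n * Real.sqrt μk)
    (hxk1 : xk1 = fun i => xk i + αk * Δx i)
    (hzk1 : zk1 = fun i => zk i + αk * Δz i)
    (γ₁ : ℝ) (hγ₁ : |γ₁| ≤ C₃ * Real.sqrt n / αk)
    (Δx' Δz' : Fin n → ℝ)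
    (hQN : ∀ i, zk i * Δx' i + xk i * Δz' i
      = σk1 * μk1 - xk1 i * zk1 i - γ₁ * αk ^ 2 * (Δx i * Δz i))
    -- additional hypotheses
    (αdec : ℝ) (hαdec : αdec ∈ Set.Ioo (0:ℝ) 1)
    (hαdecσ : αdec + σmax ≤ 1 - σmin)
    (hmono1 : (1 - αk) * (∑ i, xk i * zk i) ≤ ∑ i, xk1 i * zk1 i)
    (hmono2 : (∑ i, xk1 i * zk1 i) ≤ (1 - αdec * αk) * (∑ i, xk i * zk i))
    (hNbr1 : ∀ i, γ * μk1 ≤ xk1 i * zk1 i ∧ xk1 i * zk1 i ≤ μk1 / γ)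
    (β C₆ : ℝ) (hβ : 1 ≤ β)
    (hC₆ : C₆ = (σmax + γ⁻¹ + 8 * β) * (1 + 2 * C₃⁻¹) * γ ^ (-(1:ℝ)/2))
    (hcomb1 : euclNorm (fun i => Real.sqrt (zk i / xk i) * (αk * Δx i + α * Δx' i))
      ≤ C₆ * αk * (n:ℝ) ^ ((5:ℝ)/2) * μk ^ ((1:ℝ)/2))
    (hcomb2 : euclNorm (fun i => Real.sqrt (xk i / zk i) * (αk * Δz i + α * Δz' i))
      ≤ C₆ * αk * (n:ℝ) ^ ((5:ℝ)/2) * μk ^ ((1:ℝ)/2))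
    (κ C₅ : ℝ)
    (hκ : κ = 2 * ω ^ 2 + C₆ ^ 2)
    (hC₅ : C₅ = C₃⁻¹ * σmin / (C₃⁻¹ * σmin + (1 + γ) / (1 - γ) * κ))
    (hαk : αk ∈ Set.Ioc (0:ℝ)
      (min 1 (min (((1 + C₃) * ω ^ 2)⁻¹) (C₅ / (n:ℝ) ^ 5))))
    (hα : α ∈ Set.Icc ((C₃ * C₅)⁻¹ * (n:ℝ) ^ 5 * αk ^ 2) (C₃⁻¹ * αk))
    (xk2 zk2 : Fin n → ℝ)
    (hxk2 : xk2 = fun i => xk1 i + α * Δx' i)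
    (hzk2 : zk2 = fun i => zk1 i + α * Δz' i)
    (μk2 : ℝ) (hμk2 : μk2 = (∑ i, xk2 i * zk2 i) / n) :
    ((1 - α) * (∑ i, xk1 i * zk1 i) ≤ ∑ i, xk2 i * zk2 i ∧
      (∑ i, xk2 i * zk2 i) ≤ (1 - αdec * α) * (∑ i, xk1 i * zk1 i)) ∧
    (∀ i, γ * μk2 ≤ xk2 i * zk2 i ∧ xk2 i * zk2 i ≤ (1 / γ) * μk2) := by
  obtain ⟨hγ0, hγ1⟩ := hγ
  have hn1 : (1:ℝ) ≤ (n:ℝ) := by exact_mod_cast hn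
  have hn0 : (0:ℝ) < (n:ℝ) := by linarith
  have hnne : (n:ℝ) ≠ 0 := ne_of_gt hn0
  have hC₃0 : 0 < C₃ := lt_of_lt_of_le one_pos hC₃
  have hC₃ne : C₃ ≠ 0 := ne_of_gt hC₃0
  have hαk0 : 0 < αk := hαk.1
  have hαkne : αk ≠ 0 := ne_of_gt hαk0
  have : Nonempty (Fin n) := ⟨⟨0, hn⟩⟩
  have hSpos : 0 < ∑ i, xk i * zk i :=
    Finset.sum_pos (fun i _ => mul_pos (hxk i) (hzk i)) Finset.univ_nonempty
  have hS1pos : 0 < ∑ i, xk1 i * zk1 i :=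
    Finset.sum_pos (fun i _ => mul_pos (hxk1pos i) (hzk1pos i)) Finset.univ_nonempty
  have hμk0 : 0 < μk := by rw [hμk]; exact div_pos hSpos hn0
  have hμk10 : 0 < μk1 := by rw [hμk1]; exact div_pos hS1pos hn0
  have hS : ∑ i, xk i * zk i = (n:ℝ) * μk := by rw [hμk]; field_simp
  have hS1 : ∑ i, xk1 i * zk1 i = (n:ℝ) * μk1 := by rw [hμk1]; field_simp
  have hC₆0 : 0 < C₆ := by
    rw [hC₆]
    have h1 : 0 < σmax + γ⁻¹ + 8 * β := by
      have h3 : 0 < γ⁻¹ := inv_pos.2 hγ0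
      linarith only [h3, hσ0, hσ, hβ]
    have h2 : 0 < 1 + 2 * C₃⁻¹ := by
      have : 0 < C₃⁻¹ := inv_pos.2 hC₃0
      linarith
    exact mul_pos (mul_pos h1 h2) (Real.rpow_pos_of_pos hγ0 _)
  have hκ0 : 0 < κ := by rw [hκ]; positivity
  have hBg0 : 0 < (1 + γ) / (1 - γ) * κ :=
    mul_pos (div_pos (by linarith) (by linarith)) hκ0
  have hden : 0 < C₃⁻¹ * σmin + (1 + γ) / (1 - γ) * κ := by
    have : 0 < C₃⁻¹ * σmin := mul_pos (inv_pos.2 hC₃0) hσ0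
    linarith
  have hC₅pos : 0 < C₅ := by
    rw [hC₅]; exact div_pos (mul_pos (inv_pos.2 hC₃0) hσ0) hden
  have hC₅lt1 : C₅ < 1 := by
    rw [hC₅, div_lt_one hden]
    linarith [hBg0]
  have hn5 : (1:ℝ) ≤ (n:ℝ) ^ 5 := by
    calc (1:ℝ) = 1 ^ 5 := by norm_num
    _ ≤ (n:ℝ) ^ 5 := pow_le_pow_left₀ (by norm_num) hn1 5
  have hαkC₅ : αk ≤ C₅ / (n:ℝ) ^ 5 :=
    le_trans hαk.2 ((min_le_right _ _).trans (min_le_right _ _))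
  have hαkC₅' : αk ≤ C₅ := hαkC₅.trans (div_le_self hC₅pos.le hn5)
  have hαklt1 : αk < 1 := lt_of_le_of_lt hαkC₅' hC₅lt1
  have hα0 : 0 < α := by
    have h1 : (0:ℝ) < (C₃ * C₅)⁻¹ * (n:ℝ) ^ 5 * αk ^ 2 := by positivity
    exact lt_of_lt_of_le h1 hα.1
  have hC₃inv : C₃⁻¹ ≤ 1 := by
    have h := inv_pos.2 hC₃0
    nlinarith only [h, mul_inv_cancel₀ hC₃ne, hC₃]
  have hααk : α ≤ αk := by
    calc α ≤ C₃⁻¹ * αk := hα.2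
      _ ≤ 1 * αk := mul_le_mul_of_nonneg_right hC₃inv hαk0.le
      _ = αk := one_mul αk
  have hαlt1 : α < 1 := lt_of_le_of_lt hααk hαklt1
  have hCC0 : 0 < C₃ * C₅ := mul_pos hC₃0 hC₅pos
  have m1 : αk ^ 2 * (n:ℝ) ^ 5 ≤ C₃ * C₅ * α := by
    have h := mul_le_mul_of_nonneg_left hα.1 hCC0.le
    calc αk ^ 2 * (n:ℝ) ^ 5
        = (C₃ * C₅) * ((C₃ * C₅)⁻¹ * (n:ℝ) ^ 5 * αk ^ 2) := by
          rw [show (C₃ * C₅)⁻¹ * (n:ℝ) ^ 5 * αk ^ 2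
              = (C₃ * C₅)⁻¹ * ((n:ℝ) ^ 5 * αk ^ 2) by ring,
            mul_inv_cancel_left₀ (ne_of_gt hCC0)]
          ring
      _ ≤ (C₃ * C₅) * α := h
      _ = C₃ * C₅ * α := rfl
  have hiden : C₅ * (C₃⁻¹ * σmin + (1 + γ) / (1 - γ) * κ) = C₃⁻¹ * σmin := by
    rw [hC₅]; exact div_mul_cancel₀ _ (ne_of_gt hden)
  have hCA : C₃ * (C₃⁻¹ * σmin) = σmin := by field_simp
  have m2eq : ((1 + γ) / (1 - γ) * κ) * (C₃ * C₅) = σmin * (1 - C₅) := by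
    linear_combination C₃ * hiden + (1 - C₅) * hCA
  have m2' : ((1 + γ) / (1 - γ) * κ) * (C₃ * C₅) ≤ σmin * (1 - αk) := by
    rw [m2eq]
    exact mul_le_mul_of_nonneg_left (by linarith) hσ0.le
  have hmonoμ : (1 - αk) * μk ≤ μk1 := by
    rw [hS, hS1] at hmono1
    have h : (n:ℝ) * ((1 - αk) * μk) ≤ (n:ℝ) * μk1 := by linarith [hmono1]
    exact le_of_mul_le_mul_left h hn0
  have hγne : (1:ℝ) - γ ≠ 0 := ne_of_gt (show (0:ℝ) < 1 - γ by linarith)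
  have hBgκ : (1 - γ) * ((1 + γ) / (1 - γ) * κ) = (1 + γ) * κ := by
    field_simp
  have hM : (1 + γ) * (κ * αk ^ 2 * (n:ℝ) ^ 5 * μk) ≤ (1 - γ) * (α * (σmin * μk1)) := by
    have t1 : ((1 + γ) / (1 - γ) * κ) * (αk ^ 2 * (n:ℝ) ^ 5)
        ≤ ((1 + γ) / (1 - γ) * κ) * (C₃ * C₅ * α) :=
      mul_le_mul_of_nonneg_left m1 hBg0.le
    have t3 : (((1 + γ) / (1 - γ) * κ) * (C₃ * C₅)) * α ≤ (σmin * (1 - αk)) * α :=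
      mul_le_mul_of_nonneg_right m2' hα0.le
    have t4 : ((1 + γ) / (1 - γ) * κ) * (αk ^ 2 * (n:ℝ) ^ 5) ≤ (σmin * (1 - αk)) * α := by
      linarith [t1, t3]
    have t5 : ((1 + γ) / (1 - γ) * κ) * (αk ^ 2 * (n:ℝ) ^ 5) * μk
        ≤ ((σmin * (1 - αk)) * α) * μk :=
      mul_le_mul_of_nonneg_right t4 hμk0.le
    have t7 : (σmin * α) * ((1 - αk) * μk) ≤ (σmin * α) * μk1 :=
      mul_le_mul_of_nonneg_left hmonoμ (by positivity)
    have t8 : ((1 + γ) / (1 - γ) * κ) * (αk ^ 2 * (n:ℝ) ^ 5) * μk ≤ (σmin * α) * μk1 := by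
      linarith [t5, t7]
    have t9 := mul_le_mul_of_nonneg_left t8 (show (0:ℝ) ≤ 1 - γ by linarith)
    calc (1 + γ) * (κ * αk ^ 2 * (n:ℝ) ^ 5 * μk)
        = (1 - γ) * (((1 + γ) / (1 - γ) * κ) * (αk ^ 2 * (n:ℝ) ^ 5) * μk) := by
          linear_combination (αk ^ 2 * (n:ℝ) ^ 5 * μk) * hBgκ.symm
      _ ≤ (1 - γ) * ((σmin * α) * μk1) := t9
      _ = (1 - γ) * (α * (σmin * μk1)) := by ring
  -- squares of the norm bounds
  have hRsq : (C₆ * αk * (n:ℝ) ^ ((5:ℝ)/2) * μk ^ ((1:ℝ)/2)) ^ 2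
      = C₆ ^ 2 * αk ^ 2 * (n:ℝ) ^ 5 * μk := by
    have h1 : ((n:ℝ) ^ ((5:ℝ)/2)) ^ (2:ℕ) = (n:ℝ) ^ (5:ℕ) := by
      rw [← Real.rpow_natCast ((n:ℝ) ^ ((5:ℝ)/2)) 2, ← Real.rpow_mul (Nat.cast_nonneg n),
        show ((5:ℝ)/2 * ((2:ℕ):ℝ)) = ((5:ℕ):ℝ) by norm_num, Real.rpow_natCast]
    have h2 : (μk ^ ((1:ℝ)/2)) ^ (2:ℕ) = μk := by
      rw [← Real.rpow_natCast (μk ^ ((1:ℝ)/2)) 2, ← Real.rpow_mul hμk0.le,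
        show ((1:ℝ)/2 * ((2:ℕ):ℝ)) = (1:ℝ) by norm_num, Real.rpow_one]
    rw [mul_pow, mul_pow, mul_pow, h1, h2]
  have hQsq : (ω * (n:ℝ) * Real.sqrt μk) ^ 2 = ω ^ 2 * (n:ℝ) ^ 2 * μk := by
    rw [mul_pow, mul_pow, Real.sq_sqrt hμk0.le]
  have hone : ∀ i, Real.sqrt (zk i / xk i) * Real.sqrt (xk i / zk i) = 1 :=
    fun i => sqrt_ratio_mul (hzk i) (hxk i)
  -- bounds for P
  have hfacP : ∀ i, (Real.sqrt (zk i / xk i) * (αk * Δx i + α * Δx' i))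
      * (Real.sqrt (xk i / zk i) * (αk * Δz i + α * Δz' i))
      = (αk * Δx i + α * Δx' i) * (αk * Δz i + α * Δz' i) := by
    intro i
    rw [show (Real.sqrt (zk i / xk i) * (αk * Δx i + α * Δx' i))
        * (Real.sqrt (xk i / zk i) * (αk * Δz i + α * Δz' i))
        = (Real.sqrt (zk i / xk i) * Real.sqrt (xk i / zk i))
          * ((αk * Δx i + α * Δx' i) * (αk * Δz i + α * Δz' i)) by ring, hone i, one_mul]
  obtain ⟨hPi0, hPs0⟩ := cs_pair _ _ _ hcomb1 hcomb2
  have hPi : ∀ i, |(αk * Δx i + α * Δx' i) * (αk * Δz i + α * Δz' i)|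
      ≤ C₆ ^ 2 * αk ^ 2 * (n:ℝ) ^ 5 * μk := by
    intro i
    have h := hPi0 i
    rw [hfacP i, hRsq] at h
    exact h
  have hPs : |∑ i, (αk * Δx i + α * Δx' i) * (αk * Δz i + α * Δz' i)|
      ≤ C₆ ^ 2 * αk ^ 2 * (n:ℝ) ^ 5 * μk := by
    have h := hPs0
    rw [Finset.sum_congr rfl (fun i _ => hfacP i), hRsq] at h
    exact h
  -- bounds for Q
  have hfacQ : ∀ i, (Real.sqrt (zk i / xk i) * Δx i) * (Real.sqrt (xk i / zk i) * Δz i)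
      = Δx i * Δz i := by
    intro i
    rw [show (Real.sqrt (zk i / xk i) * Δx i) * (Real.sqrt (xk i / zk i) * Δz i)
        = (Real.sqrt (zk i / xk i) * Real.sqrt (xk i / zk i)) * (Δx i * Δz i) by ring,
      hone i, one_mul]
  obtain ⟨hQi0, hQs0⟩ := cs_pair _ _ _ hDx hDz
  have hQi : ∀ i, |Δx i * Δz i| ≤ ω ^ 2 * (n:ℝ) ^ 2 * μk := by
    intro i
    have h := hQi0 i
    rw [hfacQ i, hQsq] at h
    exact h
  have hQs : |∑ i, Δx i * Δz i| ≤ ω ^ 2 * (n:ℝ) ^ 2 * μk := by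
    have h := hQs0
    rw [Finset.sum_congr rfl (fun i _ => hfacQ i), hQsq] at h
    exact h
  -- bound on 1 + α * γ₁
  have hαγ₁ : |α * γ₁| ≤ Real.sqrt n := by
    rw [abs_mul, abs_of_nonneg hα0.le]
    calc α * |γ₁| ≤ (C₃⁻¹ * αk) * (C₃ * Real.sqrt n / αk) :=
        mul_le_mul hα.2 hγ₁ (abs_nonneg _) (by positivity)
      _ = Real.sqrt n := by field_simp
  have hsqrtn : Real.sqrt n ≤ (n:ℝ) := by
    have h1 : Real.sqrt (n:ℝ) ≤ Real.sqrt ((n:ℝ) ^ 2) :=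
      Real.sqrt_le_sqrt (by nlinarith only [hn1])
    rwa [Real.sqrt_sq hn0.le] at h1
  have habsc : |1 + α * γ₁| ≤ 2 * (n:ℝ) := by
    calc |1 + α * γ₁| ≤ |(1:ℝ)| + |α * γ₁| := abs_add_le _ _
      _ = 1 + |α * γ₁| := by rw [abs_one]
      _ ≤ 2 * (n:ℝ) := by linarith
  have hn35 : (n:ℝ) ^ 3 ≤ (n:ℝ) ^ 5 := pow_le_pow_right₀ hn1 (by norm_num)
  -- bounds on E
  set E : Fin n → ℝ := fun i =>
    (αk * Δx i + α * Δx' i) * (αk * Δz i + α * Δz' i)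
      - (1 + α * γ₁) * αk ^ 2 * (Δx i * Δz i) with hEdef
  have hcQ : ∀ q : ℝ, |q| ≤ ω ^ 2 * (n:ℝ) ^ 2 * μk →
      |(1 + α * γ₁) * αk ^ 2 * q| ≤ 2 * ω ^ 2 * αk ^ 2 * (n:ℝ) ^ 5 * μk := by
    intro q hq
    have t : |(1 + α * γ₁) * αk ^ 2 * q| = |1 + α * γ₁| * αk ^ 2 * |q| := by
      rw [abs_mul, abs_mul, abs_pow, sq_abs]
    rw [t]
    have t2 : |1 + α * γ₁| * αk ^ 2 ≤ 2 * (n:ℝ) * αk ^ 2 :=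
      mul_le_mul_of_nonneg_right habsc (sq_nonneg αk)
    have t3 : |1 + α * γ₁| * αk ^ 2 * |q|
        ≤ (2 * (n:ℝ) * αk ^ 2) * (ω ^ 2 * (n:ℝ) ^ 2 * μk) :=
      mul_le_mul t2 hq (abs_nonneg _) (by positivity)
    have t4 := mul_le_mul_of_nonneg_left hn35
      (show (0:ℝ) ≤ 2 * ω ^ 2 * αk ^ 2 * μk by positivity)
    linarith [t3, t4]
  have hEi : ∀ i, |E i| ≤ κ * αk ^ 2 * (n:ℝ) ^ 5 * μk := by
    intro i
    have hE : E i = (αk * Δx i + α * Δx' i) * (αk * Δz i + α * Δz' i)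
        - (1 + α * γ₁) * αk ^ 2 * (Δx i * Δz i) := by rw [hEdef]
    rw [hE, sub_eq_add_neg]
    refine (abs_add_le _ _).trans ?_
    rw [abs_neg]
    have h1 := hPi i
    have h2 := hcQ _ (hQi i)
    have hκexp : κ * αk ^ 2 * (n:ℝ) ^ 5 * μk
        = 2 * ω ^ 2 * αk ^ 2 * (n:ℝ) ^ 5 * μk + C₆ ^ 2 * αk ^ 2 * (n:ℝ) ^ 5 * μk := by
      rw [hκ]; ring
    linarith
  have hEsum : |∑ i, E i| ≤ κ * αk ^ 2 * (n:ℝ) ^ 5 * μk := by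
    have hsum : ∑ i, E i = (∑ i, (αk * Δx i + α * Δx' i) * (αk * Δz i + α * Δz' i))
        - (1 + α * γ₁) * αk ^ 2 * (∑ i, Δx i * Δz i) := by
      rw [hEdef, Finset.sum_sub_distrib, Finset.mul_sum]
    rw [hsum, sub_eq_add_neg]
    refine (abs_add_le _ _).trans ?_
    rw [abs_neg]
    have h2 := hcQ _ hQs
    have hκexp : κ * αk ^ 2 * (n:ℝ) ^ 5 * μk
        = 2 * ω ^ 2 * αk ^ 2 * (n:ℝ) ^ 5 * μk + C₆ ^ 2 * αk ^ 2 * (n:ℝ) ^ 5 * μk := by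
      rw [hκ]; ring
    linarith [hPs]
  -- componentwise identity
  have hId : ∀ i, xk2 i * zk2 i = (1 - α) * (xk1 i * zk1 i) + α * (σk1 * μk1) + E i := by
    intro i
    have hq := hQN i
    simp only [hxk1, hzk1] at hq
    simp only [hxk2, hzk2, hxk1, hzk1, hEdef]
    linear_combination α * hq
  have hSum2 : ∑ i, xk2 i * zk2 i
      = (1 - α) * (∑ i, xk1 i * zk1 i) + (n:ℝ) * (α * (σk1 * μk1)) + ∑ i, E i := by
    rw [Finset.sum_congr rfl (fun i _ => hId i), Finset.sum_add_distrib,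
      Finset.sum_add_distrib, ← Finset.mul_sum, Finset.sum_const, Finset.card_univ,
      Fintype.card_fin, nsmul_eq_mul]
  have hσk10 : 0 < σk1 := lt_of_lt_of_le hσ0 hσk1.1
  have hY0 : 0 ≤ α * (σk1 * μk1) := by positivity
  have hX0 : 0 ≤ α * (σmin * μk1) := by positivity
  have hB0 : 0 ≤ κ * αk ^ 2 * (n:ℝ) ^ 5 * μk := by positivity
  have hXY : α * (σmin * μk1) ≤ α * (σk1 * μk1) :=
    mul_le_mul_of_nonneg_left (mul_le_mul_of_nonneg_right hσk1.1 hμk10.le) hα0.le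
  have hYZ : α * (σk1 * μk1) ≤ α * (σmax * μk1) :=
    mul_le_mul_of_nonneg_left (mul_le_mul_of_nonneg_right hσk1.2 hμk10.le) hα0.le
  have hBX : κ * αk ^ 2 * (n:ℝ) ^ 5 * μk ≤ α * (σmin * μk1) := by
    linarith [hM, mul_nonneg hγ0.le hB0, mul_nonneg hγ0.le hX0]
  have hEsum_lb : -(κ * αk ^ 2 * (n:ℝ) ^ 5 * μk) ≤ ∑ i, E i := (abs_le.1 hEsum).1
  have hEsum_ub : ∑ i, E i ≤ κ * αk ^ 2 * (n:ℝ) ^ 5 * μk := (abs_le.1 hEsum).2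
  have hnμ2 : μk2 = (1 - α) * μk1 + α * (σk1 * μk1) + (∑ i, E i) / (n:ℝ) := by
    rw [hμk2, hSum2, hS1]
    field_simp
  have hSEn_ub : (∑ i, E i) / (n:ℝ) ≤ κ * αk ^ 2 * (n:ℝ) ^ 5 * μk := by
    rw [div_le_iff₀ hn0]
    have h := le_mul_of_one_le_right hB0 hn1
    linarith
  have hSEn_lb : -(κ * αk ^ 2 * (n:ℝ) ^ 5 * μk) ≤ (∑ i, E i) / (n:ℝ) := by
    rw [le_div_iff₀ hn0]
    have h := le_mul_of_one_le_right hB0 hn1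
    linarith
  set SEn : ℝ := (∑ i, E i) / (n:ℝ) with hSEndef
  constructor
  · constructor
    · rw [hSum2]
      have h1 : α * (σk1 * μk1) ≤ (n:ℝ) * (α * (σk1 * μk1)) := le_mul_of_one_le_left hY0 hn1
      linarith
    · rw [hSum2, hS1]
      have hss : σmax + σmin ≤ 1 - αdec := by linarith
      have h2 : α * μk1 * (σmax + σmin) ≤ α * μk1 * (1 - αdec) :=
        mul_le_mul_of_nonneg_left hss (by positivity)
      have h3 : (n:ℝ) * (α * μk1 * (σmax + σmin)) ≤ (n:ℝ) * (α * μk1 * (1 - αdec)) :=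
        mul_le_mul_of_nonneg_left h2 hn0.le
      have h4 : (n:ℝ) * (α * (σk1 * μk1)) ≤ (n:ℝ) * (α * (σmax * μk1)) :=
        mul_le_mul_of_nonneg_left hYZ hn0.le
      have h5 : α * (σmin * μk1) ≤ (n:ℝ) * (α * (σmin * μk1)) :=
        le_mul_of_one_le_left hX0 hn1
      have h6 : (n:ℝ) * (α * (σmin * μk1)) ≤ (n:ℝ) * (α * (σmin * μk1)) := le_rfl
      linarith [hEsum_ub, hBX, h3, h4, h5]
  · intro i
    have hid := hId i
    have hlow := (hNbr1 i).1
    have hupγ : γ * (xk1 i * zk1 i) ≤ μk1 := by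
      have h := (le_div_iff₀ hγ0).1 (hNbr1 i).2
      linarith
    have f6 : (1 - γ) * (α * (σmin * μk1)) ≤ (1 - γ) * (α * (σk1 * μk1)) :=
      mul_le_mul_of_nonneg_left hXY (by linarith)
    have fE := abs_le.1 (hEi i)
    constructor
    · have f1 : (1 - α) * (γ * μk1) ≤ (1 - α) * (xk1 i * zk1 i) :=
        mul_le_mul_of_nonneg_left hlow (by linarith)
      have f3 : γ * SEn ≤ γ * (κ * αk ^ 2 * (n:ℝ) ^ 5 * μk) :=
        mul_le_mul_of_nonneg_left hSEn_ub hγ0.le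
      rw [hid, hnμ2]
      linarith [f1, fE.1, f3, hM, f6, hB0]
    · rw [hid, hnμ2]
      have key : γ * ((1 - α) * (xk1 i * zk1 i) + α * (σk1 * μk1) + E i)
          ≤ (1 - α) * μk1 + α * (σk1 * μk1) + SEn := by
        have f1' : (1 - α) * (γ * (xk1 i * zk1 i)) ≤ (1 - α) * μk1 :=
          mul_le_mul_of_nonneg_left hupγ (by linarith)
        have f2' : γ * E i ≤ γ * (κ * αk ^ 2 * (n:ℝ) ^ 5 * μk) :=
          mul_le_mul_of_nonneg_left fE.2 hγ0.le
        linarith [f1', f2', hSEn_lb, hM, f6, hB0]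
      calc (1 - α) * (xk1 i * zk1 i) + α * (σk1 * μk1) + E i
          = (1 / γ) * (γ * ((1 - α) * (xk1 i * zk1 i) + α * (σk1 * μk1) + E i)) := by
            field_simp
        _ ≤ (1 / γ) * ((1 - α) * μk1 + α * (σk1 * μk1) + SEn) :=
            mul_le_mul_of_nonneg_left key (by positivity)
end

section
/- Infeasible-case membership in the symmetric neighborhood after the quasi-Newton step: let all the hypotheses of the infeasible-case quasi-Newton step theorem hold (infeasible two-step setup; α_dec + σ_max ≤ 1 − σ_min with α_dec ∈ (0,1); (1 − ᾱ_k)(x^k)ᵀz^k ≤ (x^{k+1})ᵀz^{k+1} ≤ (1 − α_dec·ᾱ_k)(x^k)ᵀz^k; γμ_{k+1} ≤ x^{k+1}_i z^{k+1}_i ≤ μ_{k+1}/γ; the composite-direction bounds with C₆ = (σ_max + γ^{−1} + 8β)(1 + 2C₃^{−1})γ^{−1/2}, β ≥ 1; componentwise bound |(ᾱ_kΔx^k + ᾱΔx′)_i (ᾱ_kΔz^k + ᾱΔz′)_i| ≤ C₆²n⁵μ_kᾱ_k²; κ = 2ω² + C₆², C₅ = C₃^{−1}σ_min/(C₃^{−1}σ_min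 + ((1+γ)/(1−γ))κ); step sizes ᾱ_k ∈ (0, min{1, ((1+C₃)ω²)^{−1}, C₅/n⁵}], ᾱ ∈ [(C₃C₅)^{−1}n⁵ᾱ_k², C₃^{−1}ᾱ_k]). Assume moreover residual vectors with (r_b^{k+2}, r_c^{k+2}) = (1 − ᾱ)(r_b^{k+1}, r_c^{k+1}) and ‖(r_b^{k+1}, r_c^{k+1})‖ ≤ (R₀/μ₀)·β·μ_{k+1} for constants R₀ ≥ 0, μ₀ > 0, and that γ ≥ 2·( −8β + √((8β + 2)² + 4/(3σ_min)) )^{−1}. Then the new iterate x^{k+2} = x^{k+1} + ᾱΔx′, z^{k+2} = z^{k+1} + ᾱΔz′ satisfies: ‖(r_b^{k+2}, r_c^{k+2})‖ ≤ (R₀/μ₀)·β·μ_{k+2}; x^{k+2} and z^{k+2} have positive components; γμ_{k+2} ≤ x^{k+2}_i z^{k+2}_i ≤ μ_{k+2}/γ for every i; and μ_{k+2} ≤ (1 − α_dec·ᾱ)·μ_{k+1}. -/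
open scoped BigOperators

/-- Euclidean norm of a finitely-indexed real vector. -/
noncomputable def eucNorm {ι : Type*} [Fintype ι] (v : ι → ℝ) : ℝ :=
  Real.sqrt (∑ i, v i ^ 2)

lemma abs_apply_le_eucNorm {ι : Type*} [Fintype ι] (v : ι → ℝ) (i : ι) : |v i| ≤ eucNorm v := by
  unfold eucNorm
  have h : (v i)^2 ≤ ∑ j, v j ^ 2 :=
    Finset.single_le_sum (fun j _ => sq_nonneg (v j)) (Finset.mem_univ i)
  calc |v i| = Real.sqrt ((v i)^2) := (Real.sqrt_sq_eq_abs _).symm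
    _ ≤ _ := Real.sqrt_le_sqrt h

lemma eucNorm_const_mul {ι : Type*} [Fintype ι] (c : ℝ) (v : ι → ℝ) :
    eucNorm (fun i => c * v i) = |c| * eucNorm v := by
  unfold eucNorm
  have h : ∑ i, (c * v i)^2 = c^2 * ∑ i, (v i)^2 := by
    rw [Finset.mul_sum]; exact Finset.sum_congr rfl (fun i _ => by ring)
  rw [h, ← Real.sqrt_sq_eq_abs, ← Real.sqrt_mul (sq_nonneg c)]


lemma aux_mul9 (a b : ℝ) (ha : 9 ≤ a) (hb : 1 ≤ b) : 9 ≤ a * b := by nlinarith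

lemma aux_mul81 (a b : ℝ) (ha : 1 ≤ a) (hb : 81 ≤ b) : 81 ≤ a * b := by nlinarith

lemma aux_kappa (w c : ℝ) (h : 9 ≤ c) : 81 ≤ 2*w^2 + c^2 := by nlinarith [sq_nonneg w]

set_option maxHeartbeats 1000000 in
/-- Infeasible-case membership in the symmetric neighborhood after the
quasi-Newton step. -/
theorem inf_qn_step_neighborhood_membership
    (n m : ℕ) (hn : 1 ≤ n) (hm : 1 ≤ m)
    (γ σmin σmax ω C₃ : ℝ)
    (hγ : γ ∈ Set.Ioo (0:ℝ) 1)
    (hσ0 : 0 < σmin) (hσ : σmin ≤ σmax) (hσ1 : σmax < 1)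
    (hω : 0 < ω) (hC₃ : 1 ≤ C₃)
    (xk zk xk1 zk1 : Fin n → ℝ)
    (hxk : ∀ i, 0 < xk i) (hzk : ∀ i, 0 < zk i)
    (hxk1pos : ∀ i, 0 < xk1 i) (hzk1pos : ∀ i, 0 < zk1 i)
    (μk μk1 : ℝ)
    (hμk : μk = (∑ i, xk i * zk i) / n)
    (hμk1 : μk1 = (∑ i, xk1 i * zk1 i) / n)
    (hNbr : ∀ i, γ * μk ≤ xk i * zk i ∧ xk i * zk i ≤ μk / γ)
    (σk σk1 αk α : ℝ)
    (hσk : σmin ≤ σk ∧ σk ≤ σmax) (hσk1 : σmin ≤ σk1 ∧ σk1 ≤ σmax)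
    (Δx Δz : Fin n → ℝ)
    (hNewton : ∀ i, zk i * Δx i + xk i * Δz i = σk * μk - xk i * zk i)
    (hDx : eucNorm (fun i => Real.sqrt (zk i / xk i) * Δx i) ≤ ω * n * Real.sqrt μk)
    (hDz : eucNorm (fun i => Real.sqrt (xk i / zk i) * Δz i) ≤ ω * n * Real.sqrt μk)
    (hxk1 : xk1 = fun i => xk i + αk * Δx i)
    (hzk1 : zk1 = fun i => zk i + αk * Δz i)
    (γ₁ : ℝ) (hγ₁ : |γ₁| ≤ C₃ * Real.sqrt n / αk)
    (Δx' Δz' : Fin n → ℝ)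
    (hQN : ∀ i, zk i * Δx' i + xk i * Δz' i
      = σk1 * μk1 - xk1 i * zk1 i - γ₁ * αk ^ 2 * (Δx i * Δz i))
    (αdec : ℝ) (hαdec : αdec ∈ Set.Ioo (0:ℝ) 1)
    (hαdecσ : αdec + σmax ≤ 1 - σmin)
    (hmono1 : (1 - αk) * (∑ i, xk i * zk i) ≤ ∑ i, xk1 i * zk1 i)
    (hmono2 : (∑ i, xk1 i * zk1 i) ≤ (1 - αdec * αk) * (∑ i, xk i * zk i))
    (hNbr1 : ∀ i, γ * μk1 ≤ xk1 i * zk1 i ∧ xk1 i * zk1 i ≤ μk1 / γ)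
    (β C₆ : ℝ) (hβ : 1 ≤ β)
    (hC₆ : C₆ = (σmax + γ⁻¹ + 8 * β) * (1 + 2 * C₃⁻¹) * γ ^ (-(1:ℝ)/2))
    (hcomb1 : eucNorm (fun i => Real.sqrt (zk i / xk i) * (αk * Δx i + α * Δx' i))
      ≤ C₆ * αk * (n:ℝ) ^ ((5:ℝ)/2) * μk ^ ((1:ℝ)/2))
    (hcomb2 : eucNorm (fun i => Real.sqrt (xk i / zk i) * (αk * Δz i + α * Δz' i))
      ≤ C₆ * αk * (n:ℝ) ^ ((5:ℝ)/2) * μk ^ ((1:ℝ)/2))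
    (hcompwise : ∀ i, |(αk * Δx i + α * Δx' i) * (αk * Δz i + α * Δz' i)|
      ≤ C₆ ^ 2 * (n:ℝ) ^ 5 * μk * αk ^ 2)
    (κ C₅ : ℝ)
    (hκ : κ = 2 * ω ^ 2 + C₆ ^ 2)
    (hC₅ : C₅ = C₃⁻¹ * σmin / (C₃⁻¹ * σmin + (1 + γ) / (1 - γ) * κ))
    (hαk : αk ∈ Set.Ioc (0:ℝ)
      (min 1 (min (((1 + C₃) * ω ^ 2)⁻¹) (C₅ / (n:ℝ) ^ 5))))
    (hα : α ∈ Set.Icc ((C₃ * C₅)⁻¹ * (n:ℝ) ^ 5 * αk ^ 2) (C₃⁻¹ * αk))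
    -- residual hypotheses
    (rb1 rb2 : Fin m → ℝ) (rc1 rc2 : Fin n → ℝ)
    (hrb2 : rb2 = fun i => (1 - α) * rb1 i)
    (hrc2 : rc2 = fun i => (1 - α) * rc1 i)
    (R0 μ0 : ℝ) (hR0 : 0 ≤ R0) (hμ0 : 0 < μ0)
    (hres1 : eucNorm (Sum.elim rb1 rc1) ≤ R0 / μ0 * β * μk1)
    (hγbig : 2 * (-(8 * β) + Real.sqrt ((8 * β + 2) ^ 2 + 4 / (3 * σmin)))⁻¹ ≤ γ)
    (xk2 zk2 : Fin n → ℝ)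
    (hxk2 : xk2 = fun i => xk1 i + α * Δx' i)
    (hzk2 : zk2 = fun i => zk1 i + α * Δz' i)
    (μk2 : ℝ) (hμk2 : μk2 = (∑ i, xk2 i * zk2 i) / n) :
    eucNorm (Sum.elim rb2 rc2) ≤ R0 / μ0 * β * μk2 ∧
    (∀ i, 0 < xk2 i) ∧ (∀ i, 0 < zk2 i) ∧
    (∀ i, γ * μk2 ≤ xk2 i * zk2 i ∧ xk2 i * zk2 i ≤ μk2 / γ) ∧
    μk2 ≤ (1 - αdec * α) * μk1 := by
  obtain ⟨hγ0, hγ1⟩ := hγ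
  obtain ⟨hαk0, hαkle⟩ := hαk
  obtain ⟨hαlo, hαhi⟩ := hα
  haveI : Nonempty (Fin n) := Fin.pos_iff_nonempty.mp (by omega)
  have hnR : (1:ℝ) ≤ (n:ℝ) := by exact_mod_cast hn
  have hnR0 : (0:ℝ) < (n:ℝ) := by linarith
  have hnne : (n:ℝ) ≠ 0 := ne_of_gt hnR0
  have hsq_n : (1:ℝ) ≤ Real.sqrt n := by
    rw [show (1:ℝ) = Real.sqrt 1 by simp]; exact Real.sqrt_le_sqrt hnR
  have hsqn_le : Real.sqrt n ≤ (n:ℝ) := by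
    calc Real.sqrt (n:ℝ) ≤ Real.sqrt ((n:ℝ)^2) := Real.sqrt_le_sqrt (by nlinarith)
      _ = (n:ℝ) := Real.sqrt_sq (by linarith)
  have hC₃0 : (0:ℝ) < C₃ := by linarith
  have hC₃inv : C₃⁻¹ ≤ 1 := by
    exact inv_le_one_of_one_le₀ hC₃
  have hC₃invpos : 0 < C₃⁻¹ := inv_pos.mpr hC₃0
  have hσmin1 : σmin < 1 := lt_of_le_of_lt hσ hσ1
  have hμkpos : 0 < μk := by
    rw [hμk]
    exact div_pos (Finset.sum_pos (fun i _ => mul_pos (hxk i) (hzk i)) Finset.univ_nonempty) hnR0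
  have hμk1pos : 0 < μk1 := by
    rw [hμk1]
    exact div_pos (Finset.sum_pos (fun i _ => mul_pos (hxk1pos i) (hzk1pos i)) Finset.univ_nonempty) hnR0
  have hμknn : 0 ≤ μk := hμkpos.le
  have hsqμ : Real.sqrt μk ^ 2 = μk := Real.sq_sqrt hμknn
  -- stage 2
  have hs1s2 : ∀ i, Real.sqrt (zk i / xk i) * Real.sqrt (xk i / zk i) = 1 := by
    intro i
    have hne1 : xk i ≠ 0 := ne_of_gt (hxk i)
    have hne2 : zk i ≠ 0 := ne_of_gt (hzk i)
    rw [← Real.sqrt_mul (le_of_lt (div_pos (hzk i) (hxk i))),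
      show zk i / xk i * (xk i / zk i) = 1 by field_simp]
    exact Real.sqrt_one
  have hΔxb : ∀ i, |Real.sqrt (zk i / xk i) * Δx i| ≤ ω * n * Real.sqrt μk :=
    fun i => (abs_apply_le_eucNorm _ i).trans hDx
  have hΔzb : ∀ i, |Real.sqrt (xk i / zk i) * Δz i| ≤ ω * n * Real.sqrt μk :=
    fun i => (abs_apply_le_eucNorm _ i).trans hDz
  have hΔΔ : ∀ i, |Δx i * Δz i| ≤ ω^2 * (n:ℝ)^2 * μk := by
    intro i
    have h : Δx i * Δz i
        = (Real.sqrt (zk i/xk i) * Δx i) * (Real.sqrt (xk i/zk i) * Δz i) := by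
      calc Δx i * Δz i
          = (Real.sqrt (zk i/xk i) * Real.sqrt (xk i/zk i)) * (Δx i * Δz i) := by
            rw [hs1s2 i]; ring
        _ = _ := by ring
    rw [h, abs_mul]
    have h2 := mul_le_mul (hΔxb i) (hΔzb i) (abs_nonneg _)
      (le_trans (abs_nonneg _) (hΔxb i))
    calc |Real.sqrt (zk i/xk i) * Δx i| * |Real.sqrt (xk i/zk i) * Δz i|
        ≤ (ω * n * Real.sqrt μk) * (ω * n * Real.sqrt μk) := h2
      _ = ω^2 * (n:ℝ)^2 * μk := by linear_combination ω^2*(n:ℝ)^2*hsqμ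
  set N := (n:ℝ) ^ ((5:ℝ)/2) with hNdef
  have hμhalf : μk ^ ((1:ℝ)/2) = Real.sqrt μk := (Real.sqrt_eq_rpow μk).symm
  have hpb : ∀ i, |Real.sqrt (zk i / xk i) * (αk * Δx i + α * Δx' i)|
      ≤ C₆ * αk * N * Real.sqrt μk := by
    intro i
    have h := (abs_apply_le_eucNorm (fun i => Real.sqrt (zk i / xk i) * (αk * Δx i + α * Δx' i)) i).trans hcomb1
    rwa [hμhalf] at h
  have hqb : ∀ i, |Real.sqrt (xk i / zk i) * (αk * Δz i + α * Δz' i)|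
      ≤ C₆ * αk * N * Real.sqrt μk := by
    intro i
    have h := (abs_apply_le_eucNorm (fun i => Real.sqrt (xk i / zk i) * (αk * Δz i + α * Δz' i)) i).trans hcomb2
    rwa [hμhalf] at h
  have hN0 : 0 < N := Real.rpow_pos_of_pos hnR0 _
  have hNn : (n:ℝ) ≤ N := by
    rw [hNdef]
    nth_rewrite 1 [← Real.rpow_one (n:ℝ)]
    exact Real.rpow_le_rpow_of_exponent_le hnR (by norm_num)
  have hN2 : N^2 = (n:ℝ)^(5:ℕ) := by
    rw [hNdef, sq, ← Real.rpow_add hnR0, ← Real.rpow_natCast (n:ℝ) 5]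
    norm_num
  -- constants
  have hσmax0 : 0 ≤ σmax := le_trans hσ0.le hσ
  have hγinvpos : 0 < γ⁻¹ := inv_pos.mpr hγ0
  have hγγ : γ * γ⁻¹ = 1 := mul_inv_cancel₀ (ne_of_gt hγ0)
  have hγinv : 1 ≤ γ⁻¹ := by
    have h := mul_le_mul_of_nonneg_left hγ1.le hγinvpos.le
    linarith only [h, hγγ]
  have hrpow1 : 1 ≤ γ ^ (-(1:ℝ)/2) :=
    Real.one_le_rpow_of_pos_of_le_one_of_nonpos hγ0 hγ1.le (by norm_num)
  have hC₆9 : 9 ≤ C₆ := by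
    rw [hC₆]
    have hf1 : 9 ≤ σmax + γ⁻¹ + 8*β := by linarith only [hσmax0, hγinv, hβ]
    have hf2 : 1 ≤ 1 + 2*C₃⁻¹ := by linarith only [hC₃invpos]
    exact aux_mul9 _ _ (aux_mul9 _ _ hf1 hf2) hrpow1
  have hC₆0 : 0 ≤ C₆ := by linarith only [hC₆9]
  have hκ81 : 81 ≤ κ := by rw [hκ]; exact aux_kappa ω C₆ hC₆9
  have hκ0 : 0 < κ := by linarith only [hκ81]
  have ha0 : 0 < C₃⁻¹ * σmin := mul_pos hC₃invpos hσ0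
  have ha1 : C₃⁻¹ * σmin ≤ 1 := by
    have := mul_le_mul hC₃inv hσmin1.le hσ0.le (by norm_num : (0:ℝ) ≤ 1)
    linarith only [this]
  have h1γpos : (0:ℝ) < 1 - γ := by linarith only [hγ1]
  have h1γpos' : (0:ℝ) < 1 + γ := by linarith only [hγ0]
  have hbb : 81 ≤ (1+γ)/(1-γ)*κ := by
    refine aux_mul81 _ _ ?_ hκ81
    rw [le_div_iff₀ h1γpos]
    linarith only [hγ0]
  have hden0 : 0 < C₃⁻¹ * σmin + (1 + γ) / (1 - γ) * κ := by linarith only [ha0, hbb]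
  have hC₅pos : 0 < C₅ := by rw [hC₅]; exact div_pos ha0 hden0
  have hC₅le : C₅ ≤ 1/82 := by
    rw [hC₅, div_le_div_iff₀ hden0 (by norm_num)]
    linarith only [ha1, hbb]
  set M := σmin * (1-γ) / (1+γ) with hMdef
  have hM0 : 0 ≤ M := div_nonneg (mul_nonneg hσ0.le h1γpos.le) h1γpos'.le
  have hM1γ : (1+γ)*M = σmin*(1-γ) := by
    rw [hMdef]; field_simp
  have hMσ : M ≤ σmin := by
    rw [hMdef, div_le_iff₀ h1γpos']
    have := mul_le_mul_of_nonneg_left (by linarith only [hγ0] : (1-γ) ≤ (1+γ)) hσ0.le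
    linarith only [this]
  have hMC5 : κ*C₃*C₅ = M*(1-C₅) := by
    rw [hC₅, hMdef]
    rw [div_eq_iff (ne_of_gt h1γpos')] at *
    field_simp
    ring
  -- stage 3 : gamma condition
  have hγM : 3*M ≤ γ := by
    set S := Real.sqrt ((8*β+2)^2 + 4/(3*σmin)) with hSdef
    have hSarg : (0:ℝ) ≤ (8*β+2)^2 + 4/(3*σmin) := by positivity
    have hS2 : S^2 = (8*β+2)^2 + 4/(3*σmin) := Real.sq_sqrt hSarg
    have hSge : 8*β+2 ≤ S := by
      rw [hSdef]
      calc 8*β+2 = Real.sqrt ((8*β+2)^2) := (Real.sqrt_sq (by linarith only [hβ])).symm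
        _ ≤ _ := Real.sqrt_le_sqrt (le_add_of_nonneg_right (by positivity))
    have hD0 : (0:ℝ) < -(8*β) + S := by linarith only [hSge]
    have hγbig' : 2 * (-(8*β) + S)⁻¹ ≤ γ := hγbig
    have h2γD : 2 ≤ γ*(-(8*β) + S) := by
      have h := mul_le_mul_of_nonneg_right hγbig' hD0.le
      rw [mul_assoc, inv_mul_cancel₀ (ne_of_gt hD0), mul_one] at h
      linarith only [h]
    have hγS : 2 + 8*β*γ ≤ γ*S := by linarith only [h2γD]
    have h0' : (0:ℝ) ≤ 2 + 8*β*γ := by positivity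
    have hsq : (2+8*β*γ)^2 ≤ (γ*S)^2 := by nlinarith only [hγS, h0']
    have h4 : (γ*S)^2 = γ^2*((8*β+2)^2 + 4/(3*σmin)) := by rw [mul_pow, hS2]
    have h5 : 4*(1-γ^2) + 32*β*γ*(1-γ) ≤ γ^2*(4/(3*σmin)) := by
      rw [h4] at hsq
      nlinarith only [hsq]
    have ht : σmin*(4/(3*σmin)) = 4/3 := by field_simp
    have ht2 : γ^2*(σmin*(4/(3*σmin))) = γ^2*(4/3) := by rw [ht]
    have h6 := mul_le_mul_of_nonneg_left h5 (by linarith only [hσ0] : (0:ℝ) ≤ 3*σmin)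
    have h7 : (0:ℝ) ≤ 96*σmin*(β*(γ*(1-γ))) :=
      mul_nonneg (by linarith only [hσ0])
        (mul_nonneg (by linarith only [hβ]) (mul_nonneg hγ0.le h1γpos.le))
    have hkey : 3*σmin*(1-γ^2) ≤ γ^2 := by nlinarith only [h6, ht2, h7]
    rw [hMdef]
    rw [show 3*(σmin*(1-γ)/(1+γ)) = 3*(σmin*(1-γ))/(1+γ) by ring, div_le_iff₀ h1γpos']
    nlinarith only [hkey, hγ0, hγ1, mul_nonneg (mul_nonneg hσ0.le h1γpos.le) hγ0.le]
  -- stage 3b : step size facts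
  have hαk5 : αk ≤ C₅/(n:ℝ)^5 := hαkle.trans ((min_le_right _ _).trans (min_le_right _ _))
  have hn5ge1 : (1:ℝ) ≤ (n:ℝ)^5 := by
    have := pow_le_pow_left₀ (by norm_num : (0:ℝ) ≤ 1) hnR 5
    simpa using this
  have hαkC₅ : αk ≤ C₅ := hαk5.trans (div_le_self hC₅pos.le hn5ge1)
  have hαk82 : αk ≤ 1/82 := hαkC₅.trans hC₅le
  have hα0 : 0 < α :=
    lt_of_lt_of_le (mul_pos (mul_pos (inv_pos.mpr (mul_pos hC₃0 hC₅pos))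
      (by positivity)) (pow_pos hαk0 2)) hαlo
  have hαC₃ : α*C₃ ≤ αk := by
    have h := mul_le_mul_of_nonneg_right hαhi hC₃0.le
    rw [mul_comm C₃⁻¹ αk, mul_assoc, inv_mul_cancel₀ (ne_of_gt hC₃0), mul_one] at h
    exact h
  have hααk : α ≤ αk := by
    have h := mul_le_mul_of_nonneg_left hC₃ hα0.le
    linarith only [h, hαC₃]
  have hα82 : α ≤ 1/82 := hααk.trans hαk82
  have hn5αk : (n:ℝ)^5*αk^2 ≤ C₃*C₅*α := by
    have h := mul_le_mul_of_nonneg_left hαlo (mul_pos hC₃0 hC₅pos).le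
    rw [← mul_assoc, ← mul_assoc, mul_inv_cancel₀ (ne_of_gt (mul_pos hC₃0 hC₅pos)), one_mul] at h
    linarith only [h]
  have hμ1k : (1-αk)*μk ≤ μk1 := by
    rw [hμk, hμk1, ← mul_div_assoc]
    exact (div_le_div_iff_of_pos_right hnR0).mpr hmono1
  -- stage 4
  have hγ₁' : |γ₁| * αk ≤ C₃*Real.sqrt n := by
    have h := (le_div_iff₀ hαk0).mp hγ₁
    linarith only [h]
  have h1αγ : ∀ s:ℝ, 0 ≤ s → s ≤ α → |1+s*γ₁| ≤ 2*Real.sqrt n := by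
    intro s h0 h1
    have h2 : s * |γ₁| ≤ Real.sqrt n := by
      have ha : s * |γ₁| ≤ (C₃⁻¹*αk) * |γ₁| :=
        mul_le_mul_of_nonneg_right (h1.trans hαhi) (abs_nonneg γ₁)
      have hb : C₃⁻¹*(|γ₁| * αk) ≤ C₃⁻¹*(C₃*Real.sqrt n) :=
        mul_le_mul_of_nonneg_left hγ₁' hC₃invpos.le
      have hc : C₃⁻¹*(C₃*Real.sqrt n) = Real.sqrt n := by
        rw [← mul_assoc, inv_mul_cancel₀ (ne_of_gt hC₃0), one_mul]
      rw [hc] at hb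
      linarith only [ha, hb]
    calc |1+s*γ₁| ≤ |(1:ℝ)| + |s*γ₁| := abs_add_le 1 (s*γ₁)
      _ = 1 + s * |γ₁| := by rw [abs_one, abs_mul, abs_of_nonneg h0]
      _ ≤ 2*Real.sqrt n := by linarith only [hsq_n, h2]
  have hx1 : ∀ i, xk1 i = xk i + αk*Δx i := fun i => by rw [hxk1]
  have hz1 : ∀ i, zk1 i = zk i + αk*Δz i := fun i => by rw [hzk1]
  have key : ∀ s:ℝ, ∀ i, (xk1 i + s*Δx' i)*(zk1 i + s*Δz' i)
      = (1-s)*(xk1 i*zk1 i) + s*(σk1*μk1)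
        + ((αk*Δx i + s*Δx' i)*(αk*Δz i + s*Δz' i) - (1+s*γ₁)*αk^2*(Δx i*Δz i)) := by
    intro s i
    have h2 := hQN i
    rw [hx1 i, hz1 i] at h2 ⊢
    linear_combination s*h2
  -- per-component tight bound at s = α
  have hEi : ∀ i, |(αk*Δx i + α*Δx' i)*(αk*Δz i + α*Δz' i) - (1+α*γ₁)*αk^2*(Δx i*Δz i)|
      ≤ M*(α*μk1) := by
    intro i
    have h1 := hcompwise i
    have h2 := h1αγ α hα0.le le_rfl
    have h3 := hΔΔ i
    have h4 : |(1+α*γ₁)*αk^2*(Δx i*Δz i)| ≤ 2*Real.sqrt n*αk^2*(ω^2*(n:ℝ)^2*μk) := by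
      rw [abs_mul, abs_mul, abs_of_nonneg (sq_nonneg αk)]
      have := mul_le_mul h2 h3 (abs_nonneg _) (by positivity)
      nlinarith only [this, sq_nonneg αk, mul_le_mul_of_nonneg_right h2 (sq_nonneg αk)]
    have habs : |(αk*Δx i + α*Δx' i)*(αk*Δz i + α*Δz' i) - (1+α*γ₁)*αk^2*(Δx i*Δz i)|
        ≤ |(αk*Δx i + α*Δx' i)*(αk*Δz i + α*Δz' i)| + |(1+α*γ₁)*αk^2*(Δx i*Δz i)| :=
      abs_sub _ _
    have hA : Real.sqrt n * (n:ℝ)^2 ≤ (n:ℝ)^5 := by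
      have h31 : Real.sqrt n * (n:ℝ)^2 ≤ (n:ℝ)^3 := by
        nlinarith only [mul_le_mul_of_nonneg_right hsqn_le (sq_nonneg (n:ℝ))]
      have h32 : (n:ℝ)^3 ≤ (n:ℝ)^5 := pow_le_pow_right₀ hnR (by norm_num)
      linarith only [h31, h32]
    have hstep1 : 2*Real.sqrt n*αk^2*(ω^2*(n:ℝ)^2*μk) ≤ 2*ω^2*((n:ℝ)^5*αk^2)*μk := by
      have hB : (0:ℝ) ≤ 2*ω^2*αk^2*μk := by positivity
      nlinarith only [mul_le_mul_of_nonneg_right hA hB]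
    have hstep3 : κ*((n:ℝ)^5*αk^2)*μk ≤ κ*(C₃*C₅*α)*μk := by
      have := mul_le_mul_of_nonneg_left hn5αk (mul_nonneg hκ0.le hμknn)
      nlinarith only [this]
    have hstep4 : κ*(C₃*C₅*α)*μk = M*(1-C₅)*α*μk := by linear_combination α*μk*hMC5
    have h5a : (1-C₅)*μk ≤ μk1 := by
      have := mul_le_mul_of_nonneg_right (by linarith only [hαkC₅] : 1-C₅ ≤ 1-αk) hμknn
      linarith only [this, hμ1k]
    have hstep5 : M*(1-C₅)*α*μk ≤ M*(α*μk1) := by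
      have := mul_le_mul_of_nonneg_left h5a (mul_nonneg hM0 hα0.le)
      nlinarith only [this]
    have hκeq : C₆^2*(n:ℝ)^5*μk*αk^2 + 2*ω^2*((n:ℝ)^5*αk^2)*μk = κ*((n:ℝ)^5*αk^2)*μk := by
      rw [hκ]; ring
    linarith only [habs, h1, h4, hstep1, hstep3, hstep4, hstep5, hκeq]
  -- stage 5
  have hid : ∀ i, xk2 i*zk2 i = (1-α)*(xk1 i*zk1 i) + α*(σk1*μk1)
      + ((αk*Δx i + α*Δx' i)*(αk*Δz i + α*Δz' i) - (1+α*γ₁)*αk^2*(Δx i*Δz i)) := by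
    intro i
    simp only [hxk2, hzk2]
    exact key α i
  have hSum1 : ∑ i, xk1 i*zk1 i = (n:ℝ)*μk1 := by
    rw [hμk1, mul_div_cancel₀ _ hnne]
  set E := ∑ i, ((αk*Δx i + α*Δx' i)*(αk*Δz i + α*Δz' i) - (1+α*γ₁)*αk^2*(Δx i*Δz i))
    with hEdef
  have hSum2 : ∑ i, xk2 i*zk2 i = (1-α)*((n:ℝ)*μk1) + (n:ℝ)*(α*(σk1*μk1)) + E := by
    rw [hEdef, ← hSum1]
    rw [show ∑ i, xk2 i*zk2 i = ∑ i, ((1-α)*(xk1 i*zk1 i) + α*(σk1*μk1)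
      + ((αk*Δx i + α*Δx' i)*(αk*Δz i + α*Δz' i) - (1+α*γ₁)*αk^2*(Δx i*Δz i)))
      from Finset.sum_congr rfl (fun i _ => hid i)]
    rw [Finset.sum_add_distrib, Finset.sum_add_distrib, ← Finset.mul_sum,
      Finset.sum_const, Finset.card_univ, Fintype.card_fin, nsmul_eq_mul]
  have hμeq : μk2 = (1-α)*μk1 + α*(σk1*μk1) + E/(n:ℝ) := by
    rw [hμk2, hSum2]
    field_simp
  have hEb : |E| ≤ (n:ℝ)*(M*(α*μk1)) := by
    calc |E| ≤ ∑ i, |(αk*Δx i + α*Δx' i)*(αk*Δz i + α*Δz' i) - (1+α*γ₁)*αk^2*(Δx i*Δz i)| := by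
          rw [hEdef]; exact Finset.abs_sum_le_sum_abs _ _
      _ ≤ ∑ _i : Fin n, M*(α*μk1) := Finset.sum_le_sum (fun i _ => hEi i)
      _ = (n:ℝ)*(M*(α*μk1)) := by
          rw [Finset.sum_const, Finset.card_univ, Fintype.card_fin, nsmul_eq_mul]
  have hEn : |E/(n:ℝ)| ≤ M*(α*μk1) := by
    rw [abs_div, abs_of_pos hnR0, div_le_iff₀ hnR0]
    linarith only [hEb]
  obtain ⟨hEn1, hEn2⟩ := abs_le.mp hEn
  have hαμ1 : (0:ℝ) ≤ α*μk1 := mul_nonneg hα0.le hμk1pos.le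
  -- monotone decrease
  have hc : μk2 ≤ (1-αdec*α)*μk1 := by
    rw [hμeq]
    have hA : (α*μk1)*σk1 ≤ (α*μk1)*σmax := mul_le_mul_of_nonneg_left hσk1.2 hαμ1
    have hB : (α*μk1)*M ≤ (α*μk1)*σmin := mul_le_mul_of_nonneg_left hMσ hαμ1
    have hC : (α*μk1)*αdec ≤ (α*μk1)*(1-σmax-σmin) :=
      mul_le_mul_of_nonneg_left (by linarith only [hαdecσ]) hαμ1
    linarith only [hA, hB, hC, hEn2]
  have hlb : (1-α)*μk1 ≤ μk2 := by
    rw [hμeq]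
    have hA : (α*μk1)*σmin ≤ (α*μk1)*σk1 := mul_le_mul_of_nonneg_left hσk1.1 hαμ1
    have hB : (α*μk1)*M ≤ (α*μk1)*σmin := mul_le_mul_of_nonneg_left hMσ hαμ1
    linarith only [hA, hB, hEn1]
  have hμk2pos : 0 < μk2 := by
    have : (0:ℝ) < (1-α)*μk1 := mul_pos (by linarith only [hα82]) hμk1pos
    linarith only [this, hlb]
  -- neighborhood
  have hnbr2 : ∀ i, γ*μk2 ≤ xk2 i*zk2 i ∧ xk2 i*zk2 i ≤ μk2/γ := by
    intro i
    obtain ⟨hei1, hei2⟩ := abs_le.mp (hEi i)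
    have hA1 := (hNbr1 i).1
    have hA2 : γ*(xk1 i*zk1 i) ≤ μk1 := by
      have h := (hNbr1 i).2
      rw [le_div_iff₀ hγ0] at h
      linarith only [h]
    have h1απ : (0:ℝ) ≤ 1-α := by linarith only [hα82]
    have h3 : (α*μk1)*((1+γ)*M) = (α*μk1)*(σmin*(1-γ)) := by rw [hM1γ]
    have h4 : (α*μk1*(1-γ))*σmin ≤ (α*μk1*(1-γ))*σk1 :=
      mul_le_mul_of_nonneg_left hσk1.1 (mul_nonneg hαμ1 h1γpos.le)
    constructor
    · rw [hμeq, hid i]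
      have h1 : γ*(E/(n:ℝ)) ≤ γ*(M*(α*μk1)) := mul_le_mul_of_nonneg_left hEn2 hγ0.le
      have h2 : (1-α)*(γ*μk1) ≤ (1-α)*(xk1 i*zk1 i) := mul_le_mul_of_nonneg_left hA1 h1απ
      linarith only [h1, h2, h3, h4, hei1]
    · rw [le_div_iff₀ hγ0, hμeq, hid i]
      have h1 : γ*((αk*Δx i + α*Δx' i)*(αk*Δz i + α*Δz' i) - (1+α*γ₁)*αk^2*(Δx i*Δz i))
          ≤ γ*(M*(α*μk1)) := mul_le_mul_of_nonneg_left hei2 hγ0.le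
      have h2 : (1-α)*(γ*(xk1 i*zk1 i)) ≤ (1-α)*μk1 := mul_le_mul_of_nonneg_left hA2 h1απ
      linarith only [h1, h2, h3, h4, hEn1]
  -- stage 6 : positivity along the segment
  have hBb : ∀ s:ℝ, 0 ≤ s → s ≤ α → ∀ i,
      |Real.sqrt (zk i/xk i)*(αk*Δx i + s*Δx' i)|
        ≤ αk*(ω*(n:ℝ)*Real.sqrt μk) + C₆*αk*N*Real.sqrt μk := by
    intro s h0 h1 i
    have hlam0 : 0 ≤ s/α := div_nonneg h0 hα0.le
    have hlam1 : s/α ≤ 1 := (div_le_one hα0).mpr h1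
    have hrep : Real.sqrt (zk i/xk i)*(αk*Δx i + s*Δx' i)
        = (1-s/α)*(αk*(Real.sqrt (zk i/xk i)*Δx i))
          + (s/α)*(Real.sqrt (zk i/xk i)*(αk*Δx i + α*Δx' i)) := by
      field_simp
      ring
    have hX := hΔxb i
    have hY := hpb i
    have hXnn : (0:ℝ) ≤ ω*(n:ℝ)*Real.sqrt μk := by positivity
    have hYnn : (0:ℝ) ≤ C₆*αk*N*Real.sqrt μk := le_trans (abs_nonneg _) hY
    calc |Real.sqrt (zk i/xk i)*(αk*Δx i + s*Δx' i)|
        ≤ |(1-s/α)*(αk*(Real.sqrt (zk i/xk i)*Δx i))|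
          + |(s/α)*(Real.sqrt (zk i/xk i)*(αk*Δx i + α*Δx' i))| := by
          rw [hrep]; exact abs_add_le _ _
      _ = (1-s/α)*(αk * |Real.sqrt (zk i/xk i)*Δx i|)
          + (s/α) * |Real.sqrt (zk i/xk i)*(αk*Δx i + α*Δx' i)| := by
          rw [abs_mul ((1:ℝ)-s/α) (αk*(Real.sqrt (zk i/xk i)*Δx i)), abs_mul (s/α) _,
            abs_mul αk (Real.sqrt (zk i/xk i)*Δx i),
            abs_of_nonneg (by linarith only [hlam1] : (0:ℝ) ≤ 1-s/α),
            abs_of_nonneg hlam0, abs_of_nonneg hαk0.le]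
      _ ≤ αk*(ω*(n:ℝ)*Real.sqrt μk) + C₆*αk*N*Real.sqrt μk := by
          have e1 : (1-s/α)*(αk * |Real.sqrt (zk i/xk i)*Δx i|)
              ≤ (1-s/α)*(αk*(ω*(n:ℝ)*Real.sqrt μk)) :=
            mul_le_mul_of_nonneg_left (mul_le_mul_of_nonneg_left hX hαk0.le)
              (by linarith only [hlam1])
          have e2 : (s/α) * |Real.sqrt (zk i/xk i)*(αk*Δx i + α*Δx' i)|
              ≤ (s/α)*(C₆*αk*N*Real.sqrt μk) := mul_le_mul_of_nonneg_left hY hlam0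
          nlinarith only [e1, e2, hlam0, hlam1, hXnn, hYnn, hαk0,
            mul_nonneg hlam0 (mul_nonneg hαk0.le hXnn),
            mul_nonneg (by linarith only [hlam1] : (0:ℝ) ≤ 1-s/α) hYnn]
  have hBbz : ∀ s:ℝ, 0 ≤ s → s ≤ α → ∀ i,
      |Real.sqrt (xk i/zk i)*(αk*Δz i + s*Δz' i)|
        ≤ αk*(ω*(n:ℝ)*Real.sqrt μk) + C₆*αk*N*Real.sqrt μk := by
    intro s h0 h1 i
    have hlam0 : 0 ≤ s/α := div_nonneg h0 hα0.le
    have hlam1 : s/α ≤ 1 := (div_le_one hα0).mpr h1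
    have hrep : Real.sqrt (xk i/zk i)*(αk*Δz i + s*Δz' i)
        = (1-s/α)*(αk*(Real.sqrt (xk i/zk i)*Δz i))
          + (s/α)*(Real.sqrt (xk i/zk i)*(αk*Δz i + α*Δz' i)) := by
      field_simp
      ring
    have hX := hΔzb i
    have hY := hqb i
    have hXnn : (0:ℝ) ≤ ω*(n:ℝ)*Real.sqrt μk := by positivity
    have hYnn : (0:ℝ) ≤ C₆*αk*N*Real.sqrt μk := le_trans (abs_nonneg _) hY
    calc |Real.sqrt (xk i/zk i)*(αk*Δz i + s*Δz' i)|
        ≤ |(1-s/α)*(αk*(Real.sqrt (xk i/zk i)*Δz i))|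
          + |(s/α)*(Real.sqrt (xk i/zk i)*(αk*Δz i + α*Δz' i))| := by
          rw [hrep]; exact abs_add_le _ _
      _ = (1-s/α)*(αk * |Real.sqrt (xk i/zk i)*Δz i|)
          + (s/α) * |Real.sqrt (xk i/zk i)*(αk*Δz i + α*Δz' i)| := by
          rw [abs_mul ((1:ℝ)-s/α) (αk*(Real.sqrt (xk i/zk i)*Δz i)), abs_mul (s/α) _,
            abs_mul αk (Real.sqrt (xk i/zk i)*Δz i),
            abs_of_nonneg (by linarith only [hlam1] : (0:ℝ) ≤ 1-s/α),
            abs_of_nonneg hlam0, abs_of_nonneg hαk0.le]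
      _ ≤ αk*(ω*(n:ℝ)*Real.sqrt μk) + C₆*αk*N*Real.sqrt μk := by
          have e1 : (1-s/α)*(αk * |Real.sqrt (xk i/zk i)*Δz i|)
              ≤ (1-s/α)*(αk*(ω*(n:ℝ)*Real.sqrt μk)) :=
            mul_le_mul_of_nonneg_left (mul_le_mul_of_nonneg_left hX hαk0.le)
              (by linarith only [hlam1])
          have e2 : (s/α) * |Real.sqrt (xk i/zk i)*(αk*Δz i + α*Δz' i)|
              ≤ (s/α)*(C₆*αk*N*Real.sqrt μk) := mul_le_mul_of_nonneg_left hY hlam0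
          nlinarith only [e1, e2, hlam0, hlam1, hXnn, hYnn, hαk0,
            mul_nonneg hlam0 (mul_nonneg hαk0.le hXnn),
            mul_nonneg (by linarith only [hlam1] : (0:ℝ) ≤ 1-s/α) hYnn]
  have hgen : ∀ s:ℝ, 0 ≤ s → s ≤ α → ∀ i,
      |(αk*Δx i + s*Δx' i)*(αk*Δz i + s*Δz' i) - (1+s*γ₁)*αk^2*(Δx i*Δz i)|
        ≤ γ*(α*μk1) := by
    intro s h0 h1 i
    set B := αk*(ω*(n:ℝ)*Real.sqrt μk) + C₆*αk*N*Real.sqrt μk with hBdef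
    have hBnn : 0 ≤ B := by positivity
    have hP : |(αk*Δx i + s*Δx' i)*(αk*Δz i + s*Δz' i)| ≤ B^2 := by
      have hone := hs1s2 i
      have hrw : (αk*Δx i + s*Δx' i)*(αk*Δz i + s*Δz' i)
          = (Real.sqrt (zk i/xk i)*(αk*Δx i + s*Δx' i))
            * (Real.sqrt (xk i/zk i)*(αk*Δz i + s*Δz' i)) := by
        calc (αk*Δx i + s*Δx' i)*(αk*Δz i + s*Δz' i)
            = (Real.sqrt (zk i/xk i)*Real.sqrt (xk i/zk i))
              * ((αk*Δx i + s*Δx' i)*(αk*Δz i + s*Δz' i)) := by rw [hone]; ring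
          _ = _ := by ring
      rw [hrw, abs_mul, sq]
      exact mul_le_mul (hBb s h0 h1 i) (hBbz s h0 h1 i) (abs_nonneg _)
        (le_trans (abs_nonneg _) (hBb s h0 h1 i))
    have hB2 : B^2 ≤ 2*κ*((n:ℝ)^5*αk^2)*μk := by
      have hsum : ω*(n:ℝ) + C₆*N ≤ (ω+C₆)*N := by
        have := mul_le_mul_of_nonneg_left hNn hω.le
        linarith only [this]
      have h0' : (0:ℝ) ≤ ω*(n:ℝ) + C₆*N :=
        add_nonneg (mul_nonneg hω.le (by linarith only [hnR])) (mul_nonneg hC₆0 hN0.le)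
      have hsq2 : (ω*(n:ℝ) + C₆*N)^2 ≤ ((ω+C₆)*N)^2 := by nlinarith only [hsum, h0']
      have hBeq : B^2 = αk^2*((ω*(n:ℝ) + C₆*N)^2)*(Real.sqrt μk)^2 := by
        rw [hBdef]; ring
      rw [hBeq, hsqμ]
      have h3 : ((ω+C₆)*N)^2 = (ω+C₆)^2*(n:ℝ)^5 := by
        rw [mul_pow, hN2]
      have h4 : (ω+C₆)^2 ≤ 2*κ := by rw [hκ]; nlinarith only [sq_nonneg (ω-C₆)]
      have h5 : αk^2*((ω*(n:ℝ) + C₆*N)^2)*μk ≤ αk^2*(((ω+C₆)*N)^2)*μk :=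
        mul_le_mul_of_nonneg_right (mul_le_mul_of_nonneg_left hsq2 (sq_nonneg αk)) hμknn
      have h6 : αk^2*((ω+C₆)^2*(n:ℝ)^5)*μk ≤ αk^2*(2*κ*(n:ℝ)^5)*μk := by
        have := mul_le_mul_of_nonneg_right h4 (by positivity : (0:ℝ) ≤ (n:ℝ)^5)
        have h7 := mul_le_mul_of_nonneg_right
          (mul_le_mul_of_nonneg_left this (sq_nonneg αk)) hμknn
        calc αk^2*((ω+C₆)^2*(n:ℝ)^5)*μk = αk^2*((ω+C₆)^2*(n:ℝ)^5)*μk := rfl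
          _ ≤ αk^2*(2*κ*(n:ℝ)^5)*μk := h7
      rw [h3] at h5
      calc αk^2*((ω*(n:ℝ) + C₆*N)^2)*μk ≤ αk^2*((ω+C₆)^2*(n:ℝ)^5)*μk := h5
        _ ≤ αk^2*(2*κ*(n:ℝ)^5)*μk := h6
        _ = 2*κ*((n:ℝ)^5*αk^2)*μk := by ring
    have h2 := h1αγ s h0 h1
    have h3 := hΔΔ i
    have h4 : |(1+s*γ₁)*αk^2*(Δx i*Δz i)| ≤ 2*Real.sqrt n*αk^2*(ω^2*(n:ℝ)^2*μk) := by
      rw [abs_mul, abs_mul, abs_of_nonneg (sq_nonneg αk)]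
      have := mul_le_mul h2 h3 (abs_nonneg _) (by positivity)
      nlinarith only [this, sq_nonneg αk, mul_le_mul_of_nonneg_right h2 (sq_nonneg αk)]
    have hA : Real.sqrt n * (n:ℝ)^2 ≤ (n:ℝ)^5 := by
      have h31 : Real.sqrt n * (n:ℝ)^2 ≤ (n:ℝ)^3 := by
        nlinarith only [mul_le_mul_of_nonneg_right hsqn_le (sq_nonneg (n:ℝ))]
      have h32 : (n:ℝ)^3 ≤ (n:ℝ)^5 := pow_le_pow_right₀ hnR (by norm_num)
      linarith only [h31, h32]
    have hstep1 : 2*Real.sqrt n*αk^2*(ω^2*(n:ℝ)^2*μk) ≤ 2*ω^2*((n:ℝ)^5*αk^2)*μk := by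
      have hB' : (0:ℝ) ≤ 2*ω^2*αk^2*μk := by positivity
      nlinarith only [mul_le_mul_of_nonneg_right hA hB']
    have habs : |(αk*Δx i + s*Δx' i)*(αk*Δz i + s*Δz' i) - (1+s*γ₁)*αk^2*(Δx i*Δz i)|
        ≤ |(αk*Δx i + s*Δx' i)*(αk*Δz i + s*Δz' i)| + |(1+s*γ₁)*αk^2*(Δx i*Δz i)| :=
      abs_sub _ _
    have hω2κ : 2*ω^2 ≤ κ := by rw [hκ]; nlinarith only [sq_nonneg C₆]
    have htot : |(αk*Δx i + s*Δx' i)*(αk*Δz i + s*Δz' i) - (1+s*γ₁)*αk^2*(Δx i*Δz i)|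
        ≤ 3*κ*((n:ℝ)^5*αk^2)*μk := by
      have hnn : (0:ℝ) ≤ ((n:ℝ)^5*αk^2)*μk := by positivity
      have h8 : 2*ω^2*((n:ℝ)^5*αk^2)*μk ≤ κ*((n:ℝ)^5*αk^2)*μk := by
        nlinarith only [mul_le_mul_of_nonneg_right hω2κ hnn]
      linarith only [habs, hP, hB2, h4, hstep1, h8]
    have hstep3 : 3*κ*((n:ℝ)^5*αk^2)*μk ≤ 3*κ*(C₃*C₅*α)*μk := by
      have := mul_le_mul_of_nonneg_left hn5αk (mul_nonneg (by linarith only [hκ0] : (0:ℝ) ≤ 3*κ) hμknn)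
      nlinarith only [this]
    have hstep4 : 3*κ*(C₃*C₅*α)*μk = 3*M*(1-C₅)*α*μk := by linear_combination 3*α*μk*hMC5
    have h5a : (1-C₅)*μk ≤ μk1 := by
      have := mul_le_mul_of_nonneg_right (by linarith only [hαkC₅] : 1-C₅ ≤ 1-αk) hμknn
      linarith only [this, hμ1k]
    have hstep5 : 3*M*(1-C₅)*α*μk ≤ 3*M*(α*μk1) := by
      have := mul_le_mul_of_nonneg_left h5a (mul_nonneg (by linarith only [hM0] : (0:ℝ) ≤ 3*M) hα0.le)
      nlinarith only [this]
    have hstep6 : 3*M*(α*μk1) ≤ γ*(α*μk1) := mul_le_mul_of_nonneg_right hγM hαμ1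
    linarith only [htot, hstep3, hstep4, hstep5, hstep6]
  have hfpos : ∀ s:ℝ, 0 ≤ s → s ≤ α → ∀ i, 0 < (xk1 i + s*Δx' i)*(zk1 i + s*Δz' i) := by
    intro s h0 h1 i
    rw [key s i]
    obtain ⟨he1, _⟩ := abs_le.mp (hgen s h0 h1 i)
    have hA := (hNbr1 i).1
    have hint1 : (1-s)*(γ*μk1) ≤ (1-s)*(xk1 i*zk1 i) :=
      mul_le_mul_of_nonneg_left hA (by linarith only [h1, hα82] : (0:ℝ) ≤ 1-s)
    have hint2 : (0:ℝ) ≤ s*(σmin*μk1) :=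
      mul_nonneg h0 (mul_nonneg hσ0.le hμk1pos.le)
    have hint2' : s*(σmin*μk1) ≤ s*(σk1*μk1) :=
      mul_le_mul_of_nonneg_left (mul_le_mul_of_nonneg_right hσk1.1 hμk1pos.le) h0
    have hint3 : s*(γ*μk1) ≤ α*(γ*μk1) :=
      mul_le_mul_of_nonneg_right h1 (mul_nonneg hγ0.le hμk1pos.le)
    have hint4 : (0:ℝ) < γ*μk1 := mul_pos hγ0 hμk1pos
    have hint5 : γ*(α*μk1) ≤ (1/82)*(γ*μk1) := by
      nlinarith only [mul_le_mul_of_nonneg_right hα82 hint4.le]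
    nlinarith only [he1, hint1, hint2, hint2', hint3, hint4, hint5, hα82]
  have hposx : ∀ i, 0 < xk2 i := by
    intro i
    by_contra hcon
    push_neg at hcon
    have hcon' : xk1 i + α*Δx' i ≤ 0 := by
      have : xk2 i = xk1 i + α*Δx' i := by rw [hxk2]
      linarith only [hcon, this.le, this.ge]
    have hΔ'neg : Δx' i < 0 := by
      rcases lt_or_ge (Δx' i) 0 with h | h
      · exact h
      · exfalso
        have := mul_nonneg hα0.le h
        linarith only [this, hcon', hxk1pos i]
    set s₀ := xk1 i / (-Δx' i) with hs₀
    have hden : (0:ℝ) < -Δx' i := by linarith only [hΔ'neg]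
    have hs₀pos : 0 < s₀ := div_pos (hxk1pos i) hden
    have hs₀le : s₀ ≤ α := by
      rw [hs₀, div_le_iff₀ hden]
      nlinarith only [hcon']
    have hzero : xk1 i + s₀*Δx' i = 0 := by
      rw [hs₀]
      field_simp
      rw [div_self (ne_of_lt hΔ'neg)]; ring
    have hf := hfpos s₀ hs₀pos.le hs₀le i
    rw [hzero, zero_mul] at hf
    exact lt_irrefl 0 hf
  have hposz : ∀ i, 0 < zk2 i := by
    intro i
    by_contra hcon
    push_neg at hcon
    have hcon' : zk1 i + α*Δz' i ≤ 0 := by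
      have : zk2 i = zk1 i + α*Δz' i := by rw [hzk2]
      linarith only [hcon, this.le, this.ge]
    have hΔ'neg : Δz' i < 0 := by
      rcases lt_or_ge (Δz' i) 0 with h | h
      · exact h
      · exfalso
        have := mul_nonneg hα0.le h
        linarith only [this, hcon', hzk1pos i]
    set s₀ := zk1 i / (-Δz' i) with hs₀
    have hden : (0:ℝ) < -Δz' i := by linarith only [hΔ'neg]
    have hs₀pos : 0 < s₀ := div_pos (hzk1pos i) hden
    have hs₀le : s₀ ≤ α := by
      rw [hs₀, div_le_iff₀ hden]
      nlinarith only [hcon']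
    have hzero : zk1 i + s₀*Δz' i = 0 := by
      rw [hs₀]
      field_simp
      rw [div_self (ne_of_lt hΔ'neg)]; ring
    have hf := hfpos s₀ hs₀pos.le hs₀le i
    rw [hzero, mul_zero] at hf
    exact lt_irrefl 0 hf
  -- residual
  have hrsum : Sum.elim rb2 rc2 = fun j => (1-α)*(Sum.elim rb1 rc1 j) := by
    funext j
    cases j with
    | inl a => simp [hrb2]
    | inr a => simp [hrc2]
  have hres : eucNorm (Sum.elim rb2 rc2) ≤ R0/μ0*β*μk2 := by
    rw [hrsum, eucNorm_const_mul, abs_of_nonneg (by linarith only [hα82] : (0:ℝ) ≤ 1-α)]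
    have hc0 : (0:ℝ) ≤ R0/μ0*β := by positivity
    calc (1-α)*eucNorm (Sum.elim rb1 rc1) ≤ (1-α)*(R0/μ0*β*μk1) :=
          mul_le_mul_of_nonneg_left hres1 (by linarith only [hα82])
      _ = (R0/μ0*β)*((1-α)*μk1) := by ring
      _ ≤ (R0/μ0*β)*μk2 := mul_le_mul_of_nonneg_left hlb hc0
  exact ⟨hres, hposx, hposz, hnbr2, hc⟩
end

section
/- Composite two-step complementarity-product identity: under the stated setup (which does not require feasibility), x^{k+2}∘z^{k+2} = (1 − ᾱ)·(x^{k+1}∘z^{k+1}) + (ᾱ_kΔx^k + ᾱΔx′)∘(ᾱ_kΔz^k + ᾱΔz′) + ᾱσ_{k+1}μ_{k+1}·e − (1 + ᾱγ₁)·ᾱ_k²·(Δx^k∘Δz^k); in particular, taking inner products with e, (x^{k+2})ᵀz^{k+2} = (1 − ᾱ(1 − σ_{k+1}))·(x^{k+1})ᵀz^{k+1} + (ᾱ_kΔx^k + ᾱΔx′)ᵀ(ᾱ_kΔz^k + ᾱΔz′) − (1 + ᾱγ₁)·ᾱ_k²·(Δx^k)ᵀΔz^k. -/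
open scoped BigOperators

/-- Composite two-step complementarity-product identity (no feasibility needed):
componentwise identity for `x^{k+2}∘z^{k+2}` and the resulting scalar identity
for `(x^{k+2})ᵀ z^{k+2}`. -/
theorem composite_two_step_identity
    (n : ℕ) (hn : 1 ≤ n)
    (xk zk Δx Δz Δx' Δz' : Fin n → ℝ)
    (σk σk1 αk α γ₁ : ℝ)
    (μk : ℝ) (hμk : μk = (∑ i, xk i * zk i) / n)
    (hNewton : ∀ i, zk i * Δx i + xk i * Δz i = σk * μk - xk i * zk i)
    (xk1 zk1 : Fin n → ℝ)
    (hxk1 : xk1 = fun i => xk i + αk * Δx i)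
    (hzk1 : zk1 = fun i => zk i + αk * Δz i)
    (μk1 : ℝ) (hμk1 : μk1 = (∑ i, xk1 i * zk1 i) / n)
    (hQN : ∀ i, zk i * Δx' i + xk i * Δz' i
      = σk1 * μk1 - xk1 i * zk1 i
        + γ₁ * (αk * (zk i * Δx i + xk i * Δz i) - (xk1 i * zk1 i - xk i * zk i)))
    (xk2 zk2 : Fin n → ℝ)
    (hxk2 : xk2 = fun i => xk1 i + α * Δx' i)
    (hzk2 : zk2 = fun i => zk1 i + α * Δz' i) :
    (∀ i, xk2 i * zk2 i
      = (1 - α) * (xk1 i * zk1 i)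
        + (αk * Δx i + α * Δx' i) * (αk * Δz i + α * Δz' i)
        + α * σk1 * μk1
        - (1 + α * γ₁) * αk ^ 2 * (Δx i * Δz i)) ∧
    (∑ i, xk2 i * zk2 i)
      = (1 - α * (1 - σk1)) * (∑ i, xk1 i * zk1 i)
        + (∑ i, (αk * Δx i + α * Δx' i) * (αk * Δz i + α * Δz' i))
        - (1 + α * γ₁) * αk ^ 2 * (∑ i, Δx i * Δz i) := by
  have hn0 : (n : ℝ) ≠ 0 := by positivity
  have key : ∀ i, xk2 i * zk2 i
      = (1 - α) * (xk1 i * zk1 i)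
        + (αk * Δx i + α * Δx' i) * (αk * Δz i + α * Δz' i)
        + α * σk1 * μk1
        - (1 + α * γ₁) * αk ^ 2 * (Δx i * Δz i) := by
    intro i
    have hq := hQN i
    subst hxk2 hzk2 hxk1 hzk1
    simp only at hq ⊢
    linear_combination α * hq
  refine ⟨key, ?_⟩
  have hsum : ∑ i, xk2 i * zk2 i
      = (1 - α) * (∑ i, xk1 i * zk1 i)
        + (∑ i, (αk * Δx i + α * Δx' i) * (αk * Δz i + α * Δz' i))
        + (n : ℝ) * (α * σk1 * μk1)
        - (1 + α * γ₁) * αk ^ 2 * (∑ i, Δx i * Δz i) := by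
    rw [Finset.sum_congr rfl fun i _ => key i]
    simp [Finset.sum_add_distrib, Finset.sum_sub_distrib, Finset.mul_sum,
      Finset.sum_const, Finset.card_univ]

  rw [hsum]
  have : (n : ℝ) * μk1 = ∑ i, xk1 i * zk1 i := by
    rw [hμk1]; field_simp
  linear_combination α * σk1 * this
end
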